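/- arXiv:1607.06696 — 3 statements merged into one kernel-verified Lean document; each statement's English description precedes it below -/
import Mathlib

section
/- Let $A$ be a symmetric positive semidefinite real $n \times n$ matrix and let $(u_1, \ldots, u_n)$ be an orthonormal basis of $\mathbb{R}^n$. Then $\det A \leq \prod_{i=1}^n \langle A u_i, u_i \rangle$. -/
open Matrix

private lemma diag_nonneg' {m : ℕ} {B : Matrix (Fin m) (Fin m) ℝ} (hB : B.PosSemidef)
    (i : Fin m) : 0 ≤ B i i := by
  simpa using hB.dotProduct_mulVec_nonneg (Pi.single i 1)

private lemma trace_eq_sum_eigenvalues' {m : ℕ} {B : Matrix (Fin m) (Fin m) ℝ}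
    (hB : B.IsHermitian) : B.trace = ∑ i, hB.eigenvalues i := by
  conv_lhs => rw [hB.spectral_theorem]
  rw [Unitary.conjStarAlgAut_apply, Matrix.trace_mul_cycle, Unitary.coe_star_mul_self, one_mul, trace_diagonal]
  simp

/-- Hadamard's inequality for PSD matrices: det ≤ product of diagonal entries. -/
private lemma det_le_prod_diag {m : ℕ} (B : Matrix (Fin m) (Fin m) ℝ) (hB : B.PosSemidef) :
    B.det ≤ ∏ i, B i i := by
  rcases Nat.eq_zero_or_pos m with hm | hm
  · subst hm; simp [Matrix.det_fin_zero]
  by_cases hpos : ∀ i, 0 < B i i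
  · set d : Fin m → ℝ := fun i => Real.sqrt (B i i)⁻¹ with hd
    have hdpos : ∀ i, 0 < d i := fun i => Real.sqrt_pos.mpr (inv_pos.mpr (hpos i))
    set D : Matrix (Fin m) (Fin m) ℝ := Matrix.diagonal d with hD
    set C : Matrix (Fin m) (Fin m) ℝ := D * B * D with hC
    have hDH : Dᴴ = D := by
      simp [hD, Matrix.conjTranspose, Matrix.diagonal_transpose]
    have hCpsd : C.PosSemidef := by
      have := hB.mul_mul_conjTranspose_same D
      rwa [hDH] at this
    have hCdiag : ∀ i, C i i = 1 := by
      intro i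
      show (Matrix.diagonal d * B * Matrix.diagonal d) i i = 1
      rw [Matrix.mul_diagonal, Matrix.diagonal_mul]
      show d i * B i i * d i = 1
      rw [hd]
      have : Real.sqrt (B i i)⁻¹ * B i i * Real.sqrt (B i i)⁻¹
          = (Real.sqrt (B i i)⁻¹ * Real.sqrt (B i i)⁻¹) * B i i := by ring
      rw [this, Real.mul_self_sqrt (inv_pos.mpr (hpos i)).le, inv_mul_cancel₀ (hpos i).ne']
    -- eigenvalues of C
    have hev : ∀ i, 0 ≤ hCpsd.1.eigenvalues i := hCpsd.eigenvalues_nonneg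
    have htr : ∑ i, hCpsd.1.eigenvalues i = (m : ℝ) := by
      rw [← trace_eq_sum_eigenvalues' hCpsd.1, Matrix.trace]
      simp [Matrix.diag, hCdiag]
    have hdetC : C.det = ∏ i, hCpsd.1.eigenvalues i := by
      simpa using hCpsd.1.det_eq_prod_eigenvalues
    -- AM-GM: ∏ λ ≤ 1
    have hAMGM : ∏ i, hCpsd.1.eigenvalues i ≤ 1 := by
      have hw : ∀ i ∈ Finset.univ (α := Fin m), (0:ℝ) ≤ (m : ℝ)⁻¹ := by
        intro i _; positivity
      have hw' : ∑ _i ∈ Finset.univ (α := Fin m), (m : ℝ)⁻¹ = 1 := by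
        rw [Finset.sum_const, Finset.card_univ, Fintype.card_fin, nsmul_eq_mul]
        field_simp
      have := Real.geom_mean_le_arith_mean_weighted Finset.univ (fun _ => (m : ℝ)⁻¹)
        (fun i => hCpsd.1.eigenvalues i) hw hw' (fun i _ => hev i)
      have hsum : ∑ i, (m : ℝ)⁻¹ * hCpsd.1.eigenvalues i = 1 := by
        rw [← Finset.mul_sum, htr]
        field_simp
      rw [hsum] at this
      have hprod : ∏ i, hCpsd.1.eigenvalues i ^ ((m : ℝ)⁻¹)
          = (∏ i, hCpsd.1.eigenvalues i) ^ ((m : ℝ)⁻¹) := by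
        rw [← Real.finset_prod_rpow _ _ (fun i _ => hev i)]
      rw [hprod] at this
      have hP0 : 0 ≤ ∏ i, hCpsd.1.eigenvalues i := Finset.prod_nonneg fun i _ => hev i
      have hm' : (0:ℝ) < (m:ℝ) := Nat.cast_pos.mpr hm
      have := Real.rpow_le_rpow (Real.rpow_nonneg hP0 _) this hm'.le
      rwa [← Real.rpow_mul hP0, inv_mul_cancel₀ hm'.ne',
        Real.rpow_one, Real.one_rpow] at this
    have hdetC1 : C.det ≤ 1 := hdetC ▸ hAMGM
    -- relate det C and det B
    have hdC : C.det = (∏ i, d i)^2 * B.det := by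
      rw [hC, Matrix.det_mul, Matrix.det_mul, hD, Matrix.det_diagonal]
      ring
    have hprodd : (∏ i, d i)^2 = (∏ i, B i i)⁻¹ := by
      rw [← Finset.prod_pow, ← Finset.prod_inv_distrib]
      congr 1; ext i
      rw [hd, sq, Real.mul_self_sqrt (inv_pos.mpr (hpos i)).le]
    have hprodpos : 0 < ∏ i, B i i := Finset.prod_pos fun i _ => hpos i
    have : B.det = C.det * ∏ i, B i i := by
      rw [hdC, hprodd]; field_simp
    rw [this]
    calc C.det * ∏ i, B i i ≤ 1 * ∏ i, B i i := by
          exact mul_le_mul_of_nonneg_right hdetC1 hprodpos.le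
      _ = ∏ i, B i i := one_mul _
  · push_neg at hpos
    obtain ⟨i, hi⟩ := hpos
    have hBii : B i i = 0 := le_antisymm hi (diag_nonneg' hB i)
    have hcol : B *ᵥ Pi.single i 1 = 0 := by
      rw [← hB.dotProduct_mulVec_zero_iff]
      simpa using hBii
    have hdet : B.det = 0 := by
      apply Matrix.det_eq_zero_of_column_eq_zero i
      intro j
      have := congrFun hcol j
      simpa [Matrix.mulVec_single] using this
    have hz : (∏ j, B j j) = 0 := Finset.prod_eq_zero (Finset.mem_univ i) hBii
    rw [hdet, hz]

theorem det_le_prod_inner_orthonormalBasis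
    (n : ℕ) (A : Matrix (Fin n) (Fin n) ℝ) (hA : A.PosSemidef)
    (u : OrthonormalBasis (Fin n) ℝ (EuclideanSpace ℝ (Fin n))) :
    A.det ≤ ∏ i : Fin n,
      inner (𝕜 := ℝ)
        ((WithLp.equiv 2 (Fin n → ℝ)).symm (A.mulVec (u i))) (u i) := by
  set U : Matrix (Fin n) (Fin n) ℝ := Matrix.of fun i j => u j i with hU
  have hUH : Uᵀᴴ = U := by
    ext i j
    simp [Matrix.conjTranspose_apply]
  have hB : (Uᵀ * A * U).PosSemidef := by
    have := hA.mul_mul_conjTranspose_same Uᵀ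
    rwa [hUH] at this
  -- U is orthogonal
  have hUtU : Uᵀ * U = 1 := by
    ext i j
    have := u.orthonormal
    rw [orthonormal_iff_ite] at this
    have h := this i j
    rw [PiLp.inner_apply] at h
    simp only [RCLike.inner_apply, conj_trivial] at h
    simp only [Matrix.mul_apply, Matrix.transpose_apply, hU, Matrix.of_apply, Matrix.one_apply]
    rw [← h]
    exact Finset.sum_congr rfl fun _ _ => mul_comm _ _
  have hdetU : U.det ^ 2 = 1 := by
    have := congrArg Matrix.det hUtU
    rwa [Matrix.det_mul, Matrix.det_transpose, ← sq, Matrix.det_one] at this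
  have hdetB : (Uᵀ * A * U).det = A.det := by
    rw [Matrix.det_mul, Matrix.det_mul, Matrix.det_transpose, mul_right_comm, ← sq,
      hdetU, one_mul]
  have hdiag : ∀ i, (Uᵀ * A * U) i i
      = inner (𝕜 := ℝ) ((WithLp.equiv 2 (Fin n → ℝ)).symm (A.mulVec (u i))) (u i) := by
    intro i
    rw [PiLp.inner_apply]
    simp only [RCLike.inner_apply, conj_trivial, WithLp.equiv_symm_apply, PiLp.toLp_apply,
      Matrix.mul_apply, Matrix.transpose_apply, hU, Matrix.of_apply, Matrix.mulVec,
      dotProduct]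
    refine Finset.sum_congr rfl fun k _ => ?_
    rw [mul_comm ((u i).ofLp k)]
    congr 1
    refine Finset.sum_congr rfl fun j _ => ?_
    rw [mul_comm]
    congr 1
    simpa using (congrFun (congrFun hA.1 j) k).symm
  calc A.det = (Uᵀ * A * U).det := hdetB.symm
    _ ≤ ∏ i, (Uᵀ * A * U) i i := det_le_prod_diag _ hB
    _ = _ := Finset.prod_congr rfl fun i _ => hdiag i
end

section
/- Let $\psi : \mathbb{R}^d \to [0, \infty)$ be integrable and let $q \geq 2$, $r \in \{1, \ldots, q-1\}$ with $\psi^n$ integrable for all $n \geq 1$ (write $c_n := \int \psi^n$). Then for every $N > 0$, $\frac{1}{N^{2d}} \int_{(B_N^d)^4} \psi(t_1 - t_2)^r \psi(t_3 - t_4)^q \psi(t_2 - t_4)^{q-r} \, dt_1\, dt_2\, dt_3\, dt_4 \leq \frac{c_q c_{q-r} c_r \kappa_d}{N^{d}}$, where $B_N^d$ is the ball of radius $N$ centered at the origin and $\kappa_d$ its unit-ball volume. In particular this quantity tends to $0$ as $N \to \infty$. -/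
open MeasureTheory Filter

private lemma ofReal_integral_le_lintegral_ofReal'' {α : Type*} [MeasurableSpace α]
    (μ : Measure α) (f : α → ℝ) (hf : ∀ x, 0 ≤ f x) :
    ENNReal.ofReal (∫ x, f x ∂μ) ≤ ∫⁻ x, ENNReal.ofReal (f x) ∂μ := by
  calc ENNReal.ofReal (∫ x, f x ∂μ) ≤ (‖∫ x, f x ∂μ‖ₑ : ENNReal) := by
        rw [Real.enorm_eq_ofReal_abs]
        exact ENNReal.ofReal_le_ofReal (le_abs_self _)
    _ ≤ ∫⁻ x, (‖f x‖ₑ : ENNReal) ∂μ := enorm_integral_le_lintegral_enorm f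
    _ = ∫⁻ x, ENNReal.ofReal (f x) ∂μ :=
        lintegral_congr fun x => Real.enorm_eq_ofReal (hf x)

/-- Key contraction estimate: the normalized fourfold integral of products of powers
of an integrable nonnegative function over four balls of radius `N` is bounded by
`c_q c_{q-r} c_r κ_d / N^d`, and in particular tends to `0` as `N → ∞`. -/
theorem contraction_integral_bound
    (d : ℕ) (ψ : EuclideanSpace ℝ (Fin d) → ℝ)
    (hpos : ∀ t, 0 ≤ ψ t) (hmeas : Measurable ψ)
    (hint : ∀ n : ℕ, 1 ≤ n → Integrable (fun t => ψ t ^ n))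
    (hd : 1 ≤ d) (q r : ℕ) (hq : 2 ≤ q) (hr : 1 ≤ r) (hrq : r ≤ q - 1) :
    (∀ N : ℝ, 0 < N →
      (1 / N ^ (2 * d)) *
        (∫ t₁ in Metric.ball (0 : EuclideanSpace ℝ (Fin d)) N,
          ∫ t₂ in Metric.ball (0 : EuclideanSpace ℝ (Fin d)) N,
          ∫ t₃ in Metric.ball (0 : EuclideanSpace ℝ (Fin d)) N,
          ∫ t₄ in Metric.ball (0 : EuclideanSpace ℝ (Fin d)) N,
            ψ (t₁ - t₂) ^ r * ψ (t₃ - t₄) ^ q * ψ (t₂ - t₄) ^ (q - r))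
      ≤ (∫ t, ψ t ^ q) * (∫ t, ψ t ^ (q - r)) * (∫ t, ψ t ^ r)
          * (volume (Metric.ball (0 : EuclideanSpace ℝ (Fin d)) 1)).toReal / N ^ d) ∧
    Tendsto (fun N : ℝ =>
      (1 / N ^ (2 * d)) *
        (∫ t₁ in Metric.ball (0 : EuclideanSpace ℝ (Fin d)) N,
          ∫ t₂ in Metric.ball (0 : EuclideanSpace ℝ (Fin d)) N,
          ∫ t₃ in Metric.ball (0 : EuclideanSpace ℝ (Fin d)) N,
          ∫ t₄ in Metric.ball (0 : EuclideanSpace ℝ (Fin d)) N,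
            ψ (t₁ - t₂) ^ r * ψ (t₃ - t₄) ^ q * ψ (t₂ - t₄) ^ (q - r)))
      atTop (nhds 0) := by
  have hd0 : d ≠ 0 := by omega
  have hqr1 : 1 ≤ q - r := by omega
  haveI : Nonempty (Fin d) := ⟨⟨0, hd⟩⟩
  haveI : Nontrivial (EuclideanSpace ℝ (Fin d)) := by
    refine ⟨0, EuclideanSpace.single ⟨0, hd⟩ 1, fun h => ?_⟩
    have := congrArg (fun v => v ⟨0, hd⟩) h.symm
    simp [EuclideanSpace.single] at this
  set Φ : (EuclideanSpace ℝ (Fin d)) → ENNReal := fun x => ENNReal.ofReal (ψ x) with hΦdef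
  have hΦ : Measurable Φ := ENNReal.measurable_ofReal.comp hmeas
  have hΦtop : ∀ (x : (EuclideanSpace ℝ (Fin d))) (n : ℕ), Φ x ^ n ≠ ⊤ := fun x n =>
    ENNReal.pow_ne_top ENNReal.ofReal_ne_top
  set cq := ∫ t, ψ t ^ q with hcq
  set cqr := ∫ t, ψ t ^ (q - r) with hcqr
  set cr := ∫ t, ψ t ^ r with hcr
  have hcq0 : 0 ≤ cq := integral_nonneg fun t => pow_nonneg (hpos t) _
  have hcqr0 : 0 ≤ cqr := integral_nonneg fun t => pow_nonneg (hpos t) _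
  have hcr0 : 0 ≤ cr := integral_nonneg fun t => pow_nonneg (hpos t) _
  set κ := volume (Metric.ball (0 : (EuclideanSpace ℝ (Fin d))) 1) with hκdef
  have hκtop : κ ≠ ⊤ := measure_ball_lt_top.ne
  have hκ0 : 0 ≤ κ.toReal := ENNReal.toReal_nonneg
  -- lintegral of powers equals ofReal of Bochner integral
  have hC : ∀ n : ℕ, 1 ≤ n → (∫⁻ x, Φ x ^ n) = ENNReal.ofReal (∫ x, ψ x ^ n) := by
    intro n hn
    rw [ofReal_integral_eq_lintegral_ofReal (hint n hn)
      (Filter.Eventually.of_forall fun x => pow_nonneg (hpos x) n)]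
    exact lintegral_congr fun x => (ENNReal.ofReal_pow (hpos x) n).symm
  -- translation bounds
  have hbound_right : ∀ (n : ℕ), 1 ≤ n → ∀ (a : (EuclideanSpace ℝ (Fin d))) (S : Set (EuclideanSpace ℝ (Fin d))),
      (∫⁻ x in S, Φ (x - a) ^ n) ≤ ENNReal.ofReal (∫ x, ψ x ^ n) := by
    intro n hn a S
    calc (∫⁻ x in S, Φ (x - a) ^ n) ≤ ∫⁻ x, Φ (x - a) ^ n :=
          setLIntegral_le_lintegral _ _
      _ = ∫⁻ x, Φ x ^ n := lintegral_sub_right_eq_self (fun x => Φ x ^ n) a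
      _ = _ := hC n hn
  have hbound_left : ∀ (n : ℕ), 1 ≤ n → ∀ (a : (EuclideanSpace ℝ (Fin d))) (S : Set (EuclideanSpace ℝ (Fin d))),
      (∫⁻ x in S, Φ (a - x) ^ n) ≤ ENNReal.ofReal (∫ x, ψ x ^ n) := by
    intro n hn a S
    calc (∫⁻ x in S, Φ (a - x) ^ n) ≤ ∫⁻ x, Φ (a - x) ^ n :=
          setLIntegral_le_lintegral _ _
      _ = ∫⁻ x, Φ x ^ n :=
          (Measure.measurePreserving_sub_left volume a).lintegral_comp (hΦ.pow_const n)
      _ = _ := hC n hn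
  -- main bound
  have main : ∀ N : ℝ, 0 < N →
      (∫ t₁ in Metric.ball (0 : (EuclideanSpace ℝ (Fin d))) N, ∫ t₂ in Metric.ball (0 : (EuclideanSpace ℝ (Fin d))) N,
        ∫ t₃ in Metric.ball (0 : (EuclideanSpace ℝ (Fin d))) N, ∫ t₄ in Metric.ball (0 : (EuclideanSpace ℝ (Fin d))) N,
          ψ (t₁ - t₂) ^ r * ψ (t₃ - t₄) ^ q * ψ (t₂ - t₄) ^ (q - r))
      ≤ cq * cqr * cr * κ.toReal * N ^ d := by
    intro N hN
    set S := Metric.ball (0 : (EuclideanSpace ℝ (Fin d))) N with hS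
    -- the ENNReal-valued bound
    have inner2 : ∀ t₂ : (EuclideanSpace ℝ (Fin d)),
        (∫⁻ t₃ in S, ∫⁻ t₄ in S, Φ (t₃ - t₄) ^ q * Φ (t₂ - t₄) ^ (q - r))
          ≤ ENNReal.ofReal cq * ENNReal.ofReal cqr := by
      intro t₂
      rw [lintegral_lintegral_swap]
      · calc (∫⁻ t₄ in S, ∫⁻ t₃ in S, Φ (t₃ - t₄) ^ q * Φ (t₂ - t₄) ^ (q - r))
            = ∫⁻ t₄ in S, (∫⁻ t₃ in S, Φ (t₃ - t₄) ^ q) * Φ (t₂ - t₄) ^ (q - r) :=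
              lintegral_congr fun t₄ => lintegral_mul_const' _ _ (hΦtop _ _)
          _ ≤ ∫⁻ t₄ in S, ENNReal.ofReal cq * Φ (t₂ - t₄) ^ (q - r) :=
              lintegral_mono fun t₄ =>
                mul_le_mul_left (hbound_right q (by omega) t₄ S) _
          _ = ENNReal.ofReal cq * ∫⁻ t₄ in S, Φ (t₂ - t₄) ^ (q - r) :=
              lintegral_const_mul' _ _ ENNReal.ofReal_ne_top
          _ ≤ ENNReal.ofReal cq * ENNReal.ofReal cqr :=
              mul_le_mul_right (hbound_left (q - r) hqr1 t₂ S) _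
      · exact (((hΦ.comp (measurable_fst.sub measurable_snd)).pow_const q).mul
          ((hΦ.comp (measurable_const.sub measurable_snd)).pow_const (q - r))).aemeasurable
    have key : (∫⁻ t₁ in S, ∫⁻ t₂ in S, ∫⁻ t₃ in S, ∫⁻ t₄ in S,
          Φ (t₁ - t₂) ^ r * Φ (t₃ - t₄) ^ q * Φ (t₂ - t₄) ^ (q - r))
        ≤ ENNReal.ofReal cq * ENNReal.ofReal cqr * ENNReal.ofReal cr * volume S := by
      calc (∫⁻ t₁ in S, ∫⁻ t₂ in S, ∫⁻ t₃ in S, ∫⁻ t₄ in S,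
            Φ (t₁ - t₂) ^ r * Φ (t₃ - t₄) ^ q * Φ (t₂ - t₄) ^ (q - r))
          = ∫⁻ t₁ in S, ∫⁻ t₂ in S, Φ (t₁ - t₂) ^ r *
              ∫⁻ t₃ in S, ∫⁻ t₄ in S, Φ (t₃ - t₄) ^ q * Φ (t₂ - t₄) ^ (q - r) := by
            refine lintegral_congr fun t₁ => lintegral_congr fun t₂ => ?_
            rw [← lintegral_const_mul' _ _ (hΦtop _ r)]
            refine lintegral_congr fun t₃ => ?_
            rw [← lintegral_const_mul' _ _ (hΦtop _ r)]
            exact lintegral_congr fun t₄ => by ring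
        _ ≤ ∫⁻ t₁ in S, ∫⁻ t₂ in S,
              Φ (t₁ - t₂) ^ r * (ENNReal.ofReal cq * ENNReal.ofReal cqr) :=
            lintegral_mono fun t₁ => lintegral_mono fun t₂ =>
              mul_le_mul_right (inner2 t₂) _
        _ = ∫⁻ t₁ in S, (∫⁻ t₂ in S, Φ (t₁ - t₂) ^ r) *
              (ENNReal.ofReal cq * ENNReal.ofReal cqr) :=
            lintegral_congr fun t₁ => lintegral_mul_const' _ _
              (ENNReal.mul_ne_top ENNReal.ofReal_ne_top ENNReal.ofReal_ne_top)
        _ ≤ ∫⁻ _ in S, ENNReal.ofReal cr * (ENNReal.ofReal cq * ENNReal.ofReal cqr) :=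
            lintegral_mono fun t₁ =>
              mul_le_mul_left (hbound_left r hr t₁ S) _
        _ = ENNReal.ofReal cr * (ENNReal.ofReal cq * ENNReal.ofReal cqr) * volume S :=
            setLIntegral_const S _
        _ = ENNReal.ofReal cq * ENNReal.ofReal cqr * ENNReal.ofReal cr * volume S := by
            ring
    -- convert the Bochner iterated integral
    have nn4 : ∀ t₁ t₂ t₃ t₄ : (EuclideanSpace ℝ (Fin d)),
        0 ≤ ψ (t₁ - t₂) ^ r * ψ (t₃ - t₄) ^ q * ψ (t₂ - t₄) ^ (q - r) := by
      intro t₁ t₂ t₃ t₄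
      have := hpos (t₁ - t₂); have := hpos (t₃ - t₄); have := hpos (t₂ - t₄)
      positivity
    have conv : ENNReal.ofReal (∫ t₁ in S, ∫ t₂ in S, ∫ t₃ in S, ∫ t₄ in S,
          ψ (t₁ - t₂) ^ r * ψ (t₃ - t₄) ^ q * ψ (t₂ - t₄) ^ (q - r))
        ≤ ∫⁻ t₁ in S, ∫⁻ t₂ in S, ∫⁻ t₃ in S, ∫⁻ t₄ in S,
            Φ (t₁ - t₂) ^ r * Φ (t₃ - t₄) ^ q * Φ (t₂ - t₄) ^ (q - r) := by
      refine le_trans (ofReal_integral_le_lintegral_ofReal'' _ _ fun t₁ =>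
        integral_nonneg fun t₂ => integral_nonneg fun t₃ =>
        integral_nonneg fun t₄ => nn4 t₁ t₂ t₃ t₄) (lintegral_mono fun t₁ => ?_)
      refine le_trans (ofReal_integral_le_lintegral_ofReal'' _ _ fun t₂ =>
        integral_nonneg fun t₃ => integral_nonneg fun t₄ => nn4 t₁ t₂ t₃ t₄)
        (lintegral_mono fun t₂ => ?_)
      refine le_trans (ofReal_integral_le_lintegral_ofReal'' _ _ fun t₃ =>
        integral_nonneg fun t₄ => nn4 t₁ t₂ t₃ t₄) (lintegral_mono fun t₃ => ?_)
      refine le_trans (ofReal_integral_le_lintegral_ofReal'' _ _ fun t₄ =>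
        nn4 t₁ t₂ t₃ t₄) (lintegral_mono fun t₄ => le_of_eq ?_)
      rw [ENNReal.ofReal_mul (by have := hpos (t₁ - t₂); have := hpos (t₃ - t₄); positivity),
        ENNReal.ofReal_mul (by have := hpos (t₁ - t₂); positivity),
        ENNReal.ofReal_pow (hpos _), ENNReal.ofReal_pow (hpos _),
        ENNReal.ofReal_pow (hpos _)]
    have hvol : volume S = ENNReal.ofReal (N ^ d) * κ := by
      rw [hS, hκdef, Measure.addHaar_ball volume (0 : (EuclideanSpace ℝ (Fin d))) hN.le]
      congr 2
      simp [finrank_euclideanSpace]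
    have hR : ENNReal.ofReal cq * ENNReal.ofReal cqr * ENNReal.ofReal cr * volume S ≠ ⊤ := by
      rw [hvol]
      exact ENNReal.mul_ne_top (ENNReal.mul_ne_top
        (ENNReal.mul_ne_top ENNReal.ofReal_ne_top ENNReal.ofReal_ne_top)
        ENNReal.ofReal_ne_top) (ENNReal.mul_ne_top ENNReal.ofReal_ne_top hκtop)
    have hle := le_trans conv key
    rw [ENNReal.ofReal_le_iff_le_toReal hR] at hle
    refine hle.trans (le_of_eq ?_)
    rw [hvol]
    rw [ENNReal.toReal_mul, ENNReal.toReal_mul, ENNReal.toReal_mul, ENNReal.toReal_mul,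
      ENNReal.toReal_ofReal hcq0, ENNReal.toReal_ofReal hcqr0, ENNReal.toReal_ofReal hcr0,
      ENNReal.toReal_ofReal (by positivity : (0:ℝ) ≤ N ^ d)]
    ring
  -- nonnegativity of the iterated integral
  have Inn : ∀ N : ℝ, 0 ≤
      (∫ t₁ in Metric.ball (0 : (EuclideanSpace ℝ (Fin d))) N, ∫ t₂ in Metric.ball (0 : (EuclideanSpace ℝ (Fin d))) N,
        ∫ t₃ in Metric.ball (0 : (EuclideanSpace ℝ (Fin d))) N, ∫ t₄ in Metric.ball (0 : (EuclideanSpace ℝ (Fin d))) N,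
          ψ (t₁ - t₂) ^ r * ψ (t₃ - t₄) ^ q * ψ (t₂ - t₄) ^ (q - r)) := by
    intro N
    refine integral_nonneg fun t₁ => integral_nonneg fun t₂ =>
      integral_nonneg fun t₃ => integral_nonneg fun t₄ => ?_
    have := hpos (t₁ - t₂); have := hpos (t₃ - t₄); have := hpos (t₂ - t₄)
    positivity
  have part1 : ∀ N : ℝ, 0 < N →
      (1 / N ^ (2 * d)) *
        (∫ t₁ in Metric.ball (0 : (EuclideanSpace ℝ (Fin d))) N, ∫ t₂ in Metric.ball (0 : (EuclideanSpace ℝ (Fin d))) N,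
          ∫ t₃ in Metric.ball (0 : (EuclideanSpace ℝ (Fin d))) N, ∫ t₄ in Metric.ball (0 : (EuclideanSpace ℝ (Fin d))) N,
            ψ (t₁ - t₂) ^ r * ψ (t₃ - t₄) ^ q * ψ (t₂ - t₄) ^ (q - r))
      ≤ cq * cqr * cr * κ.toReal / N ^ d := by
    intro N hN
    have h1 : (0:ℝ) ≤ 1 / N ^ (2 * d) := by positivity
    have h := mul_le_mul_of_nonneg_left (main N hN) h1
    refine h.trans (le_of_eq ?_)
    have hNd : (N:ℝ) ^ d ≠ 0 := pow_ne_zero _ hN.ne'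
    rw [two_mul, pow_add]
    field_simp
  refine ⟨part1, ?_⟩
  refine tendsto_of_tendsto_of_tendsto_of_le_of_le' tendsto_const_nhds
    (Tendsto.div_atTop (tendsto_const_nhds (x := cq * cqr * cr * κ.toReal))
      (tendsto_pow_atTop hd0)) ?_ ?_
  · filter_upwards [eventually_gt_atTop (0:ℝ)] with N hN
    have h1 : (0:ℝ) ≤ 1 / N ^ (2 * d) := by positivity
    exact mul_nonneg h1 (Inn N)
  · filter_upwards [eventually_gt_atTop (0:ℝ)] with N hN
    exact part1 N hN
end

section
/- Let $\phi_K$ denote the standard Gaussian density on $\mathbb{R}^K$ and let $l \in \mathbb{R}^K$ with $\|l\| < 1$, and set $\alpha := \sqrt{1 - \|l\|^2}$. Define $h : \mathbb{R}^K \to \mathbb{R}$ by $h(x) := \phi(\alpha^{-1} \langle l, x \rangle)$ where $\phi$ is the one-dimensional standard Gaussian density. Then the convolution satisfies $(h * \phi_K)(y) = \alpha\, \phi(\langle l, y \rangle)$ for all $y \in \mathbb{R}^K$. -/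
open MeasureTheory

open Real in

lemma key_integral (K : ℕ) (l : EuclideanSpace ℝ (Fin K)) (hl : ‖l‖ < 1) :
    ∫ u : EuclideanSpace ℝ (Fin K),
      Real.exp (-‖u‖ ^ 2 / 2 - ((Real.sqrt (1 - ‖l‖ ^ 2))⁻¹ * inner (𝕜 := ℝ) l u) ^ 2 / 2)
    = Real.sqrt (1 - ‖l‖ ^ 2) * (2 * Real.pi) ^ ((K : ℝ) / 2) := by
  have h1 : (0:ℝ) < 1 - ‖l‖^2 := by nlinarith [norm_nonneg l]
  set α := Real.sqrt (1 - ‖l‖ ^ 2) with hαdef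
  have hα2 : α ^ 2 = 1 - ‖l‖ ^ 2 := Real.sq_sqrt h1.le
  have hαpos : 0 < α := Real.sqrt_pos.mpr h1
  have hsq : ((2:ℝ) * π) ^ ((K : ℝ) / 2) = Real.sqrt (2 * π) ^ K := by
    rw [Real.sqrt_eq_rpow, ← Real.rpow_natCast ((2*π) ^ ((1:ℝ)/2)) K,
      ← Real.rpow_mul (by positivity)]
    ring_nf
  by_cases h0 : l = 0
  · subst h0
    simp only [inner_zero_left, mul_zero, ne_eq, OfNat.ofNat_ne_zero, not_false_eq_true,
      zero_pow, neg_zero, zero_div, sub_zero, norm_zero]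
    have := GaussianFourier.integral_rexp_neg_mul_sq_norm (V := EuclideanSpace ℝ (Fin K)) (b := (1:ℝ)/2)
      (by norm_num)
    simp only [finrank_euclideanSpace, Fintype.card_fin] at this
    have heq : ∀ u : EuclideanSpace ℝ (Fin K), -‖u‖^2/2 = -(1/2) * ‖u‖^2 := fun u => by ring
    simp_rw [heq]
    rw [this, show π / (1/2 : ℝ) = 2 * π by ring]
    simp [hαdef]
  · -- l ≠ 0
    have hK : NeZero K := ⟨by rintro rfl; exact h0 (Subsingleton.elim l 0)⟩
    set r := ‖l‖ with hrdef
    have hr : 0 < r := norm_pos_iff.mpr h0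
    -- orthonormal basis with b 0 = r⁻¹ • l
    obtain ⟨b, hb⟩ := Orthonormal.exists_orthonormalBasis_extension_of_card_eq
      (𝕜 := ℝ) (E := EuclideanSpace ℝ (Fin K))
      (by simp) (v := fun _ : Fin K => (r⁻¹ : ℝ) • l) (s := {0})
      (by
        rw [orthonormal_iff_ite]
        intro i j
        have hij : i = j := Subsingleton.elim i j
        subst hij
        simp only [Set.restrict_apply, if_pos rfl]
        rw [real_inner_smul_left, real_inner_smul_right, real_inner_self_eq_norm_sq]
        field_simp
        rw [← hrdef]
        simp)
    have hb0 : b 0 = (r⁻¹ : ℝ) • l := hb 0 rfl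
    have hlb : l = r • b 0 := by rw [hb0, smul_smul]; field_simp; simp
    let e := b.repr.symm
    rw [← e.measurePreserving.integral_comp e.toHomeomorph.measurableEmbedding]
    have hinner : ∀ w : EuclideanSpace ℝ (Fin K), inner (𝕜 := ℝ) l (e w) = r * w 0 := by
      intro w
      rw [hlb, real_inner_smul_left, ← b.repr_apply_apply]
      simp [e]
    have hnorm : ∀ w : EuclideanSpace ℝ (Fin K), ‖e w‖ = ‖w‖ := fun w =>
      LinearIsometryEquiv.norm_map _ _
    simp_rw [hinner, hnorm]
    -- now to Pi
    have hmp := (EuclideanSpace.volume_preserving_symm_measurableEquiv_toLp (Fin K)).symm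
    rw [← hmp.integral_comp (MeasurableEquiv.measurableEmbedding _)]
    have hpt : ∀ v : Fin K → ℝ,
        Real.exp (-‖(MeasurableEquiv.toLp 2 (Fin K → ℝ)).symm.symm v‖ ^ 2 / 2
          - (α⁻¹ * (r * ((MeasurableEquiv.toLp 2 (Fin K → ℝ)).symm.symm v : EuclideanSpace ℝ (Fin K)) 0)) ^ 2 / 2)
        = ∏ i : Fin K, (Real.exp (-(v i)^2/2) * (if i = 0 then Real.exp (-((r/α) * v i)^2/2) else 1)) := by
      intro v
      have hn : ‖(MeasurableEquiv.toLp 2 (Fin K → ℝ)).symm.symm v‖ ^ 2 = ∑ i, (v i)^2 := by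
        rw [EuclideanSpace.norm_eq, Real.sq_sqrt (by positivity)]
        simp [sq_abs]
      have hv0 : ((MeasurableEquiv.toLp 2 (Fin K → ℝ)).symm.symm v : EuclideanSpace ℝ (Fin K)) 0 = v 0 := rfl
      rw [hn, hv0, Finset.prod_mul_distrib, ← Real.exp_sum, Finset.prod_ite_eq' Finset.univ (0 : Fin K)
        (fun i => Real.exp (-((r/α) * v i)^2/2))]
      simp only [Finset.mem_univ, if_pos]
      rw [← Real.exp_add]
      congr 1
      rw [← Finset.sum_div, ← Finset.sum_neg_distrib]
      ring
    simp_rw [hpt]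
    rw [MeasureTheory.volume_pi, MeasureTheory.integral_fintype_prod_eq_prod (f := fun (i : Fin K) (z : ℝ) =>
      Real.exp (-z^2/2) * (if i = 0 then Real.exp (-((r/α) * z)^2/2) else 1))]
    have hone : ∀ i : Fin K,
        (∫ z : ℝ, Real.exp (-z^2/2) * (if i = 0 then Real.exp (-((r/α) * z)^2/2) else 1))
        = Real.sqrt (2*π) * (if i = 0 then α else 1) := by
      intro i
      by_cases hi : i = 0
      · simp only [hi, if_true]
        have : ∀ z : ℝ, Real.exp (-z^2/2) * Real.exp (-((r/α)*z)^2/2)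
            = Real.exp (-((2*α^2)⁻¹) * z^2) := by
          intro z
          rw [← Real.exp_add]
          congr 1
          have hα2' : r^2 = 1 - α^2 := by rw [hα2]; ring
          field_simp
          linear_combination (-z^2) * hα2'
        simp_rw [this]
        rw [integral_gaussian]
        rw [show π / ((2*α^2)⁻¹ : ℝ) = (2*π) * α^2 by field_simp]
        rw [Real.sqrt_mul (by positivity), Real.sqrt_sq hαpos.le]
      · simp only [if_neg hi, mul_one]
        have : ∀ z : ℝ, Real.exp (-z^2/2) = Real.exp (-(2⁻¹ : ℝ) * z^2) := by
          intro z; congr 1; ring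
        simp_rw [this]
        rw [integral_gaussian, show π / (2⁻¹:ℝ) = 2 * π by field_simp]
    simp_rw [hone]
    rw [Finset.prod_mul_distrib, Finset.prod_const, Finset.prod_ite_eq' Finset.univ (0 : Fin K)
      (fun _ => α)]
    simp only [Finset.mem_univ, if_pos, Finset.card_univ, Fintype.card_fin]
    rw [hsq]
    ring

/-- Gaussian convolution identity: for `l ∈ ℝ^K` with `‖l‖ < 1` and
`α = √(1 - ‖l‖²)`, the convolution of `h(x) = φ(α⁻¹⟨l,x⟩)` with the standard
Gaussian density `φ_K` satisfies `(h * φ_K)(y) = α φ(⟨l, y⟩)`. -/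
theorem gaussian_convolution_identity
    (K : ℕ) (l : EuclideanSpace ℝ (Fin K)) (hl : ‖l‖ < 1) (y : EuclideanSpace ℝ (Fin K)) :
    (∫ x : EuclideanSpace ℝ (Fin K),
        ((Real.sqrt (2 * Real.pi))⁻¹
            * Real.exp (-((Real.sqrt (1 - ‖l‖ ^ 2))⁻¹ * inner (𝕜 := ℝ) l (y - x)) ^ 2 / 2))
          * ((2 * Real.pi) ^ (-(K : ℝ) / 2) * Real.exp (-‖x‖ ^ 2 / 2)))
      = Real.sqrt (1 - ‖l‖ ^ 2)
          * ((Real.sqrt (2 * Real.pi))⁻¹ * Real.exp (-(inner (𝕜 := ℝ) l y : ℝ) ^ 2 / 2)) := by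
  have h1 : (0:ℝ) < 1 - ‖l‖^2 := by nlinarith [norm_nonneg l]
  set α := Real.sqrt (1 - ‖l‖ ^ 2) with hαdef
  have hα2 : α ^ 2 = 1 - ‖l‖ ^ 2 := Real.sq_sqrt h1.le
  have hαpos : 0 < α := Real.sqrt_pos.mpr h1
  set c : ℝ := inner (𝕜 := ℝ) l y with hcdef
  have step1 : ∀ x : EuclideanSpace ℝ (Fin K),
      ((Real.sqrt (2 * Real.pi))⁻¹
            * Real.exp (-(α⁻¹ * inner (𝕜 := ℝ) l (y - x)) ^ 2 / 2))
          * ((2 * Real.pi) ^ (-(K : ℝ) / 2) * Real.exp (-‖x‖ ^ 2 / 2))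
      = ((Real.sqrt (2 * Real.pi))⁻¹ * (2 * Real.pi) ^ (-(K : ℝ) / 2))
          * Real.exp (-(α⁻¹ * inner (𝕜 := ℝ) l (y - x)) ^ 2 / 2 + -‖x‖ ^ 2 / 2) := by
    intro x; rw [Real.exp_add]; ring
  simp_rw [step1]
  rw [MeasureTheory.integral_const_mul]
  rw [← MeasureTheory.integral_add_right_eq_self
    (μ := (volume : Measure (EuclideanSpace ℝ (Fin K))))
    (fun x => Real.exp (-(α⁻¹ * inner (𝕜 := ℝ) l (y - x)) ^ 2 / 2 + -‖x‖ ^ 2 / 2)) (c • l)]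
  have step2 : ∀ u : EuclideanSpace ℝ (Fin K),
      Real.exp (-(α⁻¹ * inner (𝕜 := ℝ) l (y - (u + c • l))) ^ 2 / 2 + -‖u + c • l‖ ^ 2 / 2)
      = Real.exp (-c^2/2) * Real.exp (-‖u‖ ^ 2 / 2 - (α⁻¹ * inner (𝕜 := ℝ) l u) ^ 2 / 2) := by
    intro u
    rw [← Real.exp_add]
    congr 1
    have e1 : inner (𝕜 := ℝ) l (y - (u + c • l))
        = c - inner (𝕜 := ℝ) l u - c * ‖l‖^2 := by
      rw [inner_sub_right, inner_add_right, real_inner_smul_right,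
        real_inner_self_eq_norm_sq, ← hcdef]
      ring
    have e2 : ‖u + c • l‖^2
        = ‖u‖^2 + 2*c*(inner (𝕜 := ℝ) l u) + c^2*‖l‖^2 := by
      rw [norm_add_sq_real, real_inner_smul_right, norm_smul, real_inner_comm]
      simp [mul_pow]
      ring
    rw [e1, e2]
    have hr2 : ‖l‖^2 = 1 - α^2 := by rw [hα2]; ring
    rw [hr2]
    field_simp
    ring
  simp_rw [step2]
  rw [MeasureTheory.integral_const_mul, key_integral K l hl, ← hαdef]
  have hpow : (2 * Real.pi) ^ (-(K : ℝ) / 2) * (2 * Real.pi) ^ ((K : ℝ) / 2) = 1 := by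
    rw [← Real.rpow_add (by positivity), show (-(K:ℝ)/2 + (K:ℝ)/2) = 0 by ring,
      Real.rpow_zero]
  calc (Real.sqrt (2 * Real.pi))⁻¹ * (2 * Real.pi) ^ (-(K : ℝ) / 2)
        * (Real.exp (-c ^ 2 / 2) * (α * (2 * Real.pi) ^ ((K : ℝ) / 2)))
      = ((2 * Real.pi) ^ (-(K : ℝ) / 2) * (2 * Real.pi) ^ ((K : ℝ) / 2))
        * (α * ((Real.sqrt (2 * Real.pi))⁻¹ * Real.exp (-c ^ 2 / 2))) := by ring
    _ = α * ((Real.sqrt (2 * Real.pi))⁻¹ * Real.exp (-c ^ 2 / 2)) := by rw [hpow]; ring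
end
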